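/- arXiv:2301.02381 — 2 statements merged into one kernel-verified Lean document; each statement's English description precedes it below -/
import Mathlib

section
/- Let $p$ be a prime power, $t \geq 1$, and let $f_1, f_2 \in \mathbb{F}_{p^t}[x]$ be coprime with $f_2 \neq 0$. Suppose $u, v \in \mathbb{F}_{p^t}$ and $l_1, l_2 \in \mathbb{F}_{p^t}[x]$ are coprime polynomials with $l_2 \neq 0$ such that, as rational functions, $$u x + v \frac{f_1(x)}{f_2(x)} = \frac{l_1(x)^{p^t}}{l_2(x)^{p^t}} - \frac{l_1(x)}{l_2(x)}.$$ If $f_2$ is irreducible (in particular $\deg f_2 \geq 1$ or $f_2$ constant), then $u = 0$ and $v = 0$. -/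
open Polynomial

theorem stmt_8 (p t : ℕ) (hp : ∃ q r : ℕ, q.Prime ∧ 0 < r ∧ p = q ^ r) (ht : 0 < t)
    (F : Type*) [Field F] [Fintype F] [DecidableEq F] (hF : Fintype.card F = p ^ t)
    (f₁ f₂ : F[X]) (hcop : IsCoprime f₁ f₂) (hf₂ : f₂ ≠ 0) (hirr : Irreducible f₂)
    (u v : F) (l₁ l₂ : F[X]) (hlcop : IsCoprime l₁ l₂) (hl₂ : l₂ ≠ 0)
    (heq : RatFunc.C u * RatFunc.X +
        RatFunc.C v * (algebraMap F[X] (RatFunc F) f₁ / algebraMap F[X] (RatFunc F) f₂) =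
      algebraMap F[X] (RatFunc F) (l₁ ^ (p ^ t)) / algebraMap F[X] (RatFunc F) (l₂ ^ (p ^ t)) -
        algebraMap F[X] (RatFunc F) l₁ / algebraMap F[X] (RatFunc F) l₂) :
    u = 0 ∧ v = 0 := by
  obtain ⟨q0, r, hq0, hr, rfl⟩ := hp
  set q : ℕ := (q0 ^ r) ^ t with hqdef
  have hq2 : 2 ≤ q := by
    calc 2 ≤ q0 := hq0.two_le
    _ ≤ q0 ^ r := Nat.le_self_pow hr.ne' _
    _ ≤ (q0 ^ r) ^ t := Nat.le_self_pow ht.ne' _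
  have hφ := RatFunc.algebraMap_injective F
  have hφf₂ : algebraMap F[X] (RatFunc F) f₂ ≠ 0 := RatFunc.algebraMap_ne_zero hf₂
  have hφl₂ : algebraMap F[X] (RatFunc F) l₂ ≠ 0 := RatFunc.algebraMap_ne_zero hl₂
  have hpoly : (C u * X * f₂ + C v * f₁) * l₂ ^ q * l₂ = (l₁ ^ q * l₂ - l₁ * l₂ ^ q) * f₂ := by
    apply hφ
    simp only [map_mul, map_add, map_sub, map_pow, RatFunc.algebraMap_C, RatFunc.algebraMap_X]
    simp only [map_pow] at heq
    field_simp at heq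
    linear_combination heq
  clear heq hF
  obtain ⟨k, hk⟩ : ∃ k, q = k + 2 := ⟨q - 2, by omega⟩
  rw [hk] at hpoly
  -- cancel one l₂
  have hpoly2 : (C u * X * f₂ + C v * f₁) * l₂ ^ (k + 2) =
      (l₁ ^ (k + 2) - l₁ * l₂ ^ (k + 1)) * f₂ := by
    apply mul_right_cancel₀ hl₂
    rw [hpoly]; ring
  set N : F[X] := l₁ ^ (k + 2) - l₁ * l₂ ^ (k + 1) with hN
  have hcopN : IsCoprime l₂ N := by
    have h1 : IsCoprime l₂ (l₁ ^ (k + 2)) := (hlcop.symm).pow_right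
    have := h1.add_mul_left_right (-(l₁ * l₂ ^ k))
    have e : N = l₁ ^ (k + 2) + l₂ * -(l₁ * l₂ ^ k) := by rw [hN]; ring
    rw [e]; exact this
  have hdvd : l₂ ^ (k + 2) ∣ f₂ := by
    have h1 : l₂ ^ (k + 2) ∣ N * f₂ := ⟨C u * X * f₂ + C v * f₁, by rw [← hpoly2]; ring⟩
    exact (hcopN.pow_left).dvd_of_dvd_mul_left h1
  have hunit : IsUnit l₂ := by
    have sqf : Squarefree f₂ := hirr.squarefree
    exact sqf l₂ (dvd_trans ⟨l₂ ^ k, by ring⟩ hdvd)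
  have h1 : IsCoprime f₂ (l₂ ^ (k + 2)) := by
    obtain ⟨w, hw⟩ := (hunit.pow (k + 2)).exists_left_inv
    exact ⟨0, w, by rw [zero_mul, zero_add, hw]⟩
  -- v = 0
  have hv : v = 0 := by
    by_contra hv
    have hdv : f₂ ∣ C v * (f₁ * l₂ ^ (k + 2)) :=
      ⟨N - C u * X * l₂ ^ (k + 2), by linear_combination hpoly2⟩
    have h2 : IsCoprime f₂ f₁ := hcop.symm
    have h3 : f₂ ∣ C v := (h2.mul_right h1).dvd_of_dvd_mul_right hdv
    exact hirr.not_isUnit (isUnit_of_dvd_unit h3 (isUnit_C.mpr (Ne.isUnit hv)))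
  -- u = 0
  refine ⟨?_, hv⟩
  by_contra hu
  subst hv
  simp only [C_0, zero_mul, add_zero] at hpoly2
  have hmain : C u * X * l₂ ^ (k + 2) = N := by
    apply mul_right_cancel₀ hf₂
    rw [← hpoly2]; ring
  obtain ⟨c, hc, hcl⟩ := Polynomial.isUnit_iff.mp hunit
  have hc0 : c ≠ 0 := hc.ne_zero
  have hL : N.natDegree = 1 := by
    rw [← hmain, ← hcl, ← C_pow, mul_right_comm, ← C_mul,
      natDegree_C_mul_X _ (by simp [hu, hc0])]
  rcases Nat.eq_zero_or_pos l₁.natDegree with hd | hd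
  · obtain ⟨a, rfl⟩ := natDegree_eq_zero.mp hd
    have h0 : N.natDegree = 0 := by
      rw [hN, ← hcl, ← C_pow, ← C_pow, ← C_mul, ← C_sub, natDegree_C]
    omega
  · have h1' : (l₁ ^ (k + 2)).natDegree = (k + 2) * l₁.natDegree := natDegree_pow _ _
    have h2 : (l₁ * l₂ ^ (k + 1)).natDegree ≤ l₁.natDegree := by
      rw [← hcl, ← C_pow]
      calc (l₁ * C (c ^ (k + 1))).natDegree ≤ l₁.natDegree + (C (c ^ (k + 1))).natDegree :=
        natDegree_mul_le
      _ = l₁.natDegree := by rw [natDegree_C, add_zero]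
    have hlt : (l₁ * l₂ ^ (k + 1)).natDegree < (l₁ ^ (k + 2)).natDegree := by
      rw [h1']; nlinarith
    have hNd : N.natDegree = (k + 2) * l₁.natDegree := by
      rw [hN, natDegree_sub_eq_left_of_natDegree_lt hlt, h1']
    rw [hL] at hNd
    nlinarith
end

section
/- Let $k$ be a divisor of $p^t - 1$ and let $q_1, \ldots, q_m$ be all the primes dividing $p^t - 1$ but not $k$. Let $A(k_1, k_2)$ denote the number of elements $\epsilon \in \mathbb{F}_{p^t}$ (avoiding zeros and poles of a fixed rational function $f$) such that $\epsilon$ is $k_1$-free, $f(\epsilon)$ is $k_2$-free, $\mathrm{Tr}(\epsilon) = a$ and $\mathrm{Tr}(f(\epsilon)) = b$. Then $$A(p^t-1, p^t-1) \geq \sum_{i=1}^{m} A(k, q_i k) + \sum_{i=1}^{m} A(q_i k, k) - (2m - 1)\, A(k, k).$$ -/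
open Polynomial

/-- A nonzero field element `ε` is `u`-free if `ε = ξ ^ s` with `s ∣ u` forces `s = 1`. -/
def IsFreeElem {K : Type*} [Field K] (u : ℕ) (ε : K) : Prop :=
  ε ≠ 0 ∧ ∀ (ξ : K) (s : ℕ), s ∣ u → ε = ξ ^ s → s = 1

lemma isFreeElem_mono {K : Type*} [Field K] {u v : ℕ} (h : u ∣ v) {ε : K}
    (hf : IsFreeElem v ε) : IsFreeElem u ε :=
  ⟨hf.1, fun ξ s hs hε => hf.2 ξ s (hs.trans h) hε⟩

lemma isFreeElem_iff {K : Type*} [Field K] {n d : ℕ} (hd : d ∣ n) (Q : Finset ℕ)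
    (hQ : ∀ r : ℕ, r ∈ Q ↔ r.Prime ∧ r ∣ n ∧ ¬ r ∣ d) (ε : K) :
    IsFreeElem n ε ↔ IsFreeElem d ε ∧ ∀ r ∈ Q, IsFreeElem (r * d) ε := by
  constructor
  · intro h
    refine ⟨isFreeElem_mono hd h, fun r hr => ?_⟩
    obtain ⟨hrp, hrn, hrd⟩ := (hQ r).mp hr
    exact isFreeElem_mono (((Nat.Prime.coprime_iff_not_dvd hrp).mpr hrd).mul_dvd_of_dvd_of_dvd
      hrn hd) h
  · rintro ⟨h1, h2⟩
    refine ⟨h1.1, fun ξ s hs hε => ?_⟩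
    by_contra hs1
    have hq : (s.minFac).Prime := Nat.minFac_prime hs1
    have hdvd : s.minFac ∣ s := Nat.minFac_dvd s
    have hε' : ε = (ξ ^ (s / s.minFac)) ^ s.minFac := by
      rw [← pow_mul, Nat.div_mul_cancel hdvd, hε]
    by_cases hqd : s.minFac ∣ d
    · exact hq.one_lt.ne' (h1.2 _ _ hqd hε')
    · have hqQ : s.minFac ∈ Q := (hQ _).mpr ⟨hq, hdvd.trans hs, hqd⟩
      exact hq.one_lt.ne' ((h2 _ hqQ).2 _ _ ⟨d, rfl⟩ hε')

lemma sieve_ncard {K : Type*} [Finite K] (T : Set K) {ι : Type*} (I : Finset ι)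
    (S : ι → Set K) (hS : ∀ i ∈ I, S i ⊆ T) :
    (∑ i ∈ I, ((S i).ncard : ℤ)) - ((I.card : ℤ) - 1) * T.ncard ≤
      ((T ∩ ⋂ i ∈ I, S i).ncard : ℤ) := by
  classical
  induction I using Finset.induction_on with
  | empty => simp
  | @insert i I hi IH =>
    have hSi : S i ⊆ T := hS i (Finset.mem_insert_self i I)
    have IH' := IH (fun j hj => hS j (Finset.mem_insert_of_mem hj))
    set A := T ∩ ⋂ j ∈ I, S j with hA
    have hrw : T ∩ ⋂ j ∈ insert i I, S j = A ∩ S i := by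
      ext x
      simp only [hA, Set.mem_inter_iff, Set.mem_iInter, Finset.mem_insert]
      constructor
      · rintro ⟨hx, h⟩
        exact ⟨⟨hx, fun j hj => h j (Or.inr hj)⟩, h i (Or.inl rfl)⟩
      · rintro ⟨⟨hx, h⟩, hi'⟩
        exact ⟨hx, fun j hj => hj.elim (fun e => e ▸ hi') (h j)⟩
    have hsub : A ∪ S i ⊆ T := Set.union_subset Set.inter_subset_left hSi
    have hkey : (A ∩ S i).ncard + (A ∪ S i).ncard = A.ncard + (S i).ncard :=
      Set.ncard_inter_add_ncard_union A (S i)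
    have hle : (A ∪ S i).ncard ≤ T.ncard := Set.ncard_le_ncard hsub
    rw [hrw, Finset.sum_insert hi, Finset.card_insert_of_notMem hi]
    push_cast
    have hkey' : ((A ∩ S i).ncard : ℤ) + (A ∪ S i).ncard = A.ncard + (S i).ncard := by
      exact_mod_cast hkey
    have hle' : ((A ∪ S i).ncard : ℤ) ≤ T.ncard := by exact_mod_cast hle
    linarith

theorem stmt_15 (p t : ℕ) (hp : ∃ q r : ℕ, q.Prime ∧ 0 < r ∧ p = q ^ r) (ht : 0 < t)
    (k K : Type*) [Field k] [Fintype k] [Field K] [Fintype K] [Algebra k K]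
    (hk : Fintype.card k = p) (hK : Fintype.card K = p ^ t)
    (f₁ f₂ : K[X]) (h₁ : Irreducible f₁) (h₂ : Irreducible f₂) (hcop : IsCoprime f₁ f₂)
    (a b : k)
    (A : ℕ → ℕ → ℕ)
    (hA : ∀ k₁ k₂ : ℕ, A k₁ k₂ =
      Set.ncard {ε : K | f₁.eval ε ≠ 0 ∧ f₂.eval ε ≠ 0 ∧
        IsFreeElem k₁ ε ∧ IsFreeElem k₂ (f₁.eval ε / f₂.eval ε) ∧
        Algebra.trace k K ε = a ∧ Algebra.trace k K (f₁.eval ε / f₂.eval ε) = b})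
    (d : ℕ) (hd : d ∣ p ^ t - 1)
    (Q : Finset ℕ) (hQ : ∀ r : ℕ, r ∈ Q ↔ r.Prime ∧ r ∣ p ^ t - 1 ∧ ¬ r ∣ d) :
    (∑ r ∈ Q, (A d (r * d) : ℤ)) + (∑ r ∈ Q, (A (r * d) d : ℤ)) -
        (2 * (Q.card : ℤ) - 1) * (A d d : ℤ) ≤
      (A (p ^ t - 1) (p ^ t - 1) : ℤ) := by
  classical
  -- the generic set for a pair of freeness parameters
  set G : ℕ → ℕ → Set K := fun k₁ k₂ => {ε : K | f₁.eval ε ≠ 0 ∧ f₂.eval ε ≠ 0 ∧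
      IsFreeElem k₁ ε ∧ IsFreeElem k₂ (f₁.eval ε / f₂.eval ε) ∧
      Algebra.trace k K ε = a ∧ Algebra.trace k K (f₁.eval ε / f₂.eval ε) = b} with hG
  have hAG : ∀ k₁ k₂, A k₁ k₂ = (G k₁ k₂).ncard := hA
  set T : Set K := G d d with hT
  -- the sieving family
  set S : ℕ → Set K := fun r => G (r * d) d ∩ G d (r * d) with hS
  have hsubE : ∀ r, G (r * d) d ⊆ T := by
    rintro r ε ⟨e1, e2, e3, e4, e5, e6⟩
    exact ⟨e1, e2, isFreeElem_mono (dvd_mul_left d r) e3, e4, e5, e6⟩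
  have hsubF : ∀ r, G d (r * d) ⊆ T := by
    rintro r ε ⟨e1, e2, e3, e4, e5, e6⟩
    exact ⟨e1, e2, e3, isFreeElem_mono (dvd_mul_left d r) e4, e5, e6⟩
  have hSsub : ∀ r ∈ Q, S r ⊆ T := fun r _ => Set.inter_subset_left.trans (hsubE r)
  -- the big intersection is exactly the (n, n) set
  have hbig : T ∩ ⋂ r ∈ Q, S r = G (p ^ t - 1) (p ^ t - 1) := by
    ext ε
    simp only [Set.mem_inter_iff, Set.mem_iInter, hS, hT, hG, Set.mem_setOf_eq]
    constructor
    · rintro ⟨⟨e1, e2, e3, e4, e5, e6⟩, hall⟩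
      refine ⟨e1, e2, ?_, ?_, e5, e6⟩
      · exact (isFreeElem_iff hd Q hQ ε).mpr ⟨e3, fun r hr => ((hall r hr).1).2.2.1⟩
      · exact (isFreeElem_iff hd Q hQ _).mpr ⟨e4, fun r hr => ((hall r hr).2).2.2.2.1⟩
    · rintro ⟨e1, e2, e3, e4, e5, e6⟩
      have h3 := (isFreeElem_iff hd Q hQ ε).mp e3
      have h4 := (isFreeElem_iff hd Q hQ _).mp e4
      exact ⟨⟨e1, e2, h3.1, h4.1, e5, e6⟩,
        fun r hr => ⟨⟨e1, e2, h3.2 r hr, h4.1, e5, e6⟩, ⟨e1, e2, h3.1, h4.2 r hr, e5, e6⟩⟩⟩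
  have hsieve := sieve_ncard T Q S hSsub
  rw [hbig] at hsieve
  -- for each r, ncard (S r) ≥ A (r*d) d + A d (r*d) - A d d
  have hterm : ∀ r ∈ Q, (A (r * d) d : ℤ) + (A d (r * d) : ℤ) - (A d d : ℤ) ≤
      ((S r).ncard : ℤ) := by
    intro r _
    have hkey : ((G (r * d) d ∩ G d (r * d)).ncard : ℤ) + (G (r * d) d ∪ G d (r * d)).ncard =
        (G (r * d) d).ncard + (G d (r * d)).ncard := by
      exact_mod_cast Set.ncard_inter_add_ncard_union (G (r * d) d) (G d (r * d))
    have hle : ((G (r * d) d ∪ G d (r * d)).ncard : ℤ) ≤ T.ncard := by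
      exact_mod_cast Set.ncard_le_ncard (Set.union_subset (hsubE r) (hsubF r))
    rw [hAG (r * d) d, hAG d (r * d), hAG d d]
    simp only [hS, hT] at *
    linarith
  have hsum : (∑ r ∈ Q, ((A (r * d) d : ℤ) + (A d (r * d) : ℤ) - (A d d : ℤ))) ≤
      ∑ r ∈ Q, ((S r).ncard : ℤ) := Finset.sum_le_sum hterm
  rw [Finset.sum_sub_distrib, Finset.sum_add_distrib, Finset.sum_const, nsmul_eq_mul] at hsum
  have hTc : (A d d : ℤ) = (T.ncard : ℤ) := by rw [hAG d d]
  have hXc : (A (p ^ t - 1) (p ^ t - 1) : ℤ) = ((G (p ^ t - 1) (p ^ t - 1)).ncard : ℤ) := by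
    rw [hAG]
  rw [hTc] at hsum
  rw [hXc, hTc]
  linarith
end
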